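/- Let θ, α, η, γ be inner functions such that θ = ā₁⁻¹·η·a₁ and α = ā₂⁻¹·γ·a₂ for some a₁, a₂ ∈ 𝒢H∞. Then for every φ ∈ L∞, setting φ̃ = ā₂·φ·a₁, one has A_φ^{θ,α} = A_{ā₂⁻¹}^{γ,α} ∘ A_{φ̃}^{η,γ} ∘ A_{a₁⁻¹}^{θ,η}, where A_{a₁⁻¹}^{θ,η} = M_{a₁⁻¹}|_{K_θ}; in particular, A_φ^{θ,α} is equivalent to A_{φ̃}^{η,γ}. -/

import Mathlib

open MeasureTheory

noncomputable section

/-! ## Setup: the circle, L², L∞, multiplication operators, Hardy space,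
model spaces, and generalized Toeplitz operators -/

instance : Fact (0 < 2 * Real.pi) := ⟨by positivity⟩

/-- The normalized Lebesgue (Haar) measure `dθ/2π` on the circle. -/
abbrev μH : Measure (AddCircle (2 * Real.pi)) := AddCircle.haarAddCircle

/-- The Lebesgue space `L²` of the circle. -/
abbrev L2 : Type := Lp ℂ 2 μH

/-- The space `L∞` of essentially bounded functions on the circle. -/
abbrev Linf : Type := Lp ℂ ⊤ μH

/-- Pointwise (a.e.) multiplication on `L∞`. -/
instance : Mul Linf :=
  ⟨fun f g => ((Lp.memLp g).smul (p := ⊤) (r := ⊤) (Lp.memLp f)).toLp (⇑f • ⇑g)⟩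

/-- The constant function `1` as an element of `L∞`. -/
instance : One Linf := ⟨(memLp_const (1 : ℂ)).toLp (fun _ => (1 : ℂ))⟩

/-- Complex conjugation on `L∞`. -/
instance : Star Linf :=
  ⟨fun f => ((Complex.conjCLE.toContinuousLinearMap).comp_memLp' (Lp.memLp f)).toLp
    ((starRingEnd ℂ) ∘ ⇑f)⟩

/-- Multiplication of an `L²` function by an `L∞` function. -/
def mulFun (φ : Linf) (f : L2) : L2 :=
  ((Lp.memLp f).smul (p := ⊤) (r := 2) (Lp.memLp φ)).toLp (⇑φ • ⇑f)

lemma mulFun_coe (φ : Linf) (f : L2) : mulFun φ f =ᵐ[μH] ⇑φ • ⇑f :=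
  MemLp.coeFn_toLp _

lemma mulFun_norm_le (φ : Linf) (f : L2) : ‖mulFun φ f‖ ≤ ‖φ‖ * ‖f‖ := by
  rw [mulFun, Lp.norm_toLp, Lp.norm_def, Lp.norm_def, ← ENNReal.toReal_mul]
  refine ENNReal.toReal_mono ?_ ?_
  · exact ENNReal.mul_ne_top (Lp.eLpNorm_ne_top φ) (Lp.eLpNorm_ne_top f)
  · exact eLpNorm_smul_le_eLpNorm_top_mul_eLpNorm 2 (Lp.aestronglyMeasurable f) ⇑φ

/-- The bounded multiplication operator `M_φ : L² → L²` for `φ ∈ L∞`. -/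
def mulCLM (φ : Linf) : L2 →L[ℂ] L2 :=
  LinearMap.mkContinuous
    { toFun := mulFun φ
      map_add' := by
        intro f g
        apply Lp.ext
        filter_upwards [mulFun_coe φ (f + g), mulFun_coe φ f, mulFun_coe φ g,
          Lp.coeFn_add f g, Lp.coeFn_add (mulFun φ f) (mulFun φ g)] with x h1 h2 h3 h4 h5
        simp only [Pi.smul_apply', Pi.add_apply] at *
        rw [h1, h5, h2, h3, h4]
        exact smul_add _ _ _
      map_smul' := by
        intro c f
        apply Lp.ext
        filter_upwards [mulFun_coe φ (c • f), mulFun_coe φ f,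
          Lp.coeFn_smul c f, Lp.coeFn_smul c (mulFun φ f)] with x h1 h2 h3 h4
        simp only [Pi.smul_apply', Pi.smul_apply, RingHom.id_apply] at *
        rw [h1, h4, h2, h3]
        exact smul_comm _ _ _ }
    ‖φ‖ (mulFun_norm_le φ)

/-- The image `a·K = {a f : f ∈ K}` of a subspace `K ⊆ L²` under multiplication by `a ∈ L∞`. -/
def smulSub (a : Linf) (K : Submodule ℂ L2) : Submodule ℂ L2 :=
  K.map (mulCLM a : L2 →ₗ[ℂ] L2)

/-- The Hardy space `H² = {f ∈ L² : f̂(n) = 0 for n < 0}`. -/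
def Hardy : Submodule ℂ L2 where
  carrier := {f | ∀ n : ℤ, n < 0 → fourierBasis.repr f n = 0}
  add_mem' := by
    intro f g hf hg n hn
    rw [map_add, lp.coeFn_add, Pi.add_apply, hf n hn, hg n hn, add_zero]
  zero_mem' := by
    intro n hn
    rw [map_zero, lp.coeFn_zero]
    rfl
  smul_mem' := by
    intro c f hf n hn
    rw [_root_.map_smul, lp.coeFn_smul, Pi.smul_apply, hf n hn, smul_zero]

lemma hardy_isClosed : IsClosed (Hardy : Set L2) := by
  have h : (Hardy : Set L2) =
      ⋂ n : {m : ℤ // m < 0}, {f : L2 | fourierBasis.repr f n.1 = 0} := by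
    ext f
    constructor
    · intro hf
      exact Set.mem_iInter.2 fun n => hf n.1 n.2
    · intro hf n hn
      exact Set.mem_iInter.1 hf ⟨n, hn⟩
  rw [h]
  refine isClosed_iInter fun n => isClosed_eq ?_ continuous_const
  have : (fun f : L2 => fourierBasis.repr f n.1) =
      fun f : L2 => (innerSL ℂ (fourierBasis n.1)) f := by
    funext f
    exact fourierBasis.repr_apply_apply f n.1
  rw [this]
  exact (innerSL ℂ (fourierBasis n.1)).continuous

instance : CompleteSpace Hardy := hardy_isClosed.completeSpace_coe

/-- The model space `K_θ = H² ⊖ θH² = H² ∩ (θH²)^⊥`. -/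
def modelSpace (θ : Linf) : Submodule ℂ L2 :=
  Hardy ⊓ (smulSub θ Hardy)ᗮ

instance (θ : Linf) : CompleteSpace (modelSpace θ) := by
  refine @IsClosed.completeSpace_coe _ _ _ (modelSpace θ : Set L2) ?_
  have h : (modelSpace θ : Set L2) = (Hardy : Set L2) ∩ ((smulSub θ Hardy)ᗮ : Set L2) := rfl
  rw [h]
  exact hardy_isClosed.inter (smulSub θ Hardy).isClosed_orthogonal

/-- The generalized Toeplitz operator `T_φ^{H₁,H₂} = P_{H₂} M_φ |_{H₁}`. -/
def genToeplitz (φ : Linf) (H₁ H₂ : Submodule ℂ L2) [CompleteSpace H₂] : H₁ →L[ℂ] H₂ :=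
  (Submodule.orthogonalProjectionOnto H₂).comp ((mulCLM φ).comp H₁.subtypeL)

/-- The orthogonal projection of `L²` onto `H`, viewed as an operator `L² → L²`. -/
def projL (H : Submodule ℂ L2) [CompleteSpace H] : L2 →L[ℂ] L2 :=
  H.subtypeL.comp (Submodule.orthogonalProjectionOnto H)

/-- `φ ∈ H∞`: all negative Fourier coefficients of `φ` vanish. -/
def IsHardyInf (φ : Linf) : Prop := ∀ n : ℤ, n < 0 → fourierCoeff (⇑φ) n = 0

/-- `θ` is an inner function: `θ ∈ H∞` and `|θ| = 1` a.e. on the circle. -/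
def IsInner (θ : Linf) : Prop :=
  IsHardyInf θ ∧ ∀ᵐ x ∂μH, ‖(θ : AddCircle (2 * Real.pi) → ℂ) x‖ = 1

/-- `a ∈ 𝒢H∞` with explicit inverse `b ∈ H∞`. -/
def GHinfPair (a b : Linf) : Prop := IsHardyInf a ∧ IsHardyInf b ∧ a * b = 1

/-- `a ∈ 𝒢H∞`: `a` is invertible in the algebra `H∞`. -/
def IsGHinf (a : Linf) : Prop := ∃ b, GHinfPair a b

/-- `b ∈ 𝒢H̄∞`: `b` is the conjugate of an element of `𝒢H∞`. -/
def IsGHinfBar (b : Linf) : Prop := ∃ c, IsGHinf c ∧ b = star c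

/-- `a ∈ 𝒢L∞` with explicit inverse `b`. -/
def GLinfPair (a b : Linf) : Prop := a * b = 1 ∧ b * a = 1

/-- `a ∈ 𝒢L∞`: `a` is invertible in the algebra `L∞`. -/
def IsGLinf (a : Linf) : Prop := ∃ b, GLinfPair a b

/-- The kernel of an operator between subspaces of `L²`, viewed as a subspace of `L²`. -/
def subKer {K₁ K₂ : Submodule ℂ L2} (T : K₁ →L[ℂ] K₂) : Submodule ℂ L2 :=
  (LinearMap.ker (T : K₁ →ₗ[ℂ] K₂)).map K₁.subtype

/-- The range of an operator between subspaces of `L²`, viewed as a subspace of `L²`. -/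
def subRan {K₁ K₂ : Submodule ℂ L2} (T : K₁ →L[ℂ] K₂) : Submodule ℂ L2 :=
  (LinearMap.range (T : K₁ →ₗ[ℂ] K₂)).map K₂.subtype

/-- The image of a subspace `S ⊆ K₁` under `T : K₁ → K₂`, viewed as a subspace of `L²`. -/
def opImage {K₁ K₂ : Submodule ℂ L2} (T : K₁ →L[ℂ] K₂) (S : Submodule ℂ K₁) :
    Submodule ℂ L2 :=
  (S.map (T : K₁ →ₗ[ℂ] K₂)).map K₂.subtype

section Antilinear

variable {E : Type*} [NormedAddCommGroup E] [InnerProductSpace ℂ E]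

/-- `C` is antilinear: `C(f + a g) = C f + ā C g`. -/
def IsAntilinearMap (C : E → E) : Prop :=
  ∀ (f g : E) (a : ℂ), C (f + a • g) = C f + (starRingEnd ℂ a) • C g

/-- `Cs` is the antilinear adjoint of `C`: `⟨C f, g⟩ = conj ⟨f, Cs g⟩`. -/
def IsAntilinearAdjointOf (C Cs : E → E) : Prop :=
  ∀ f g : E, (inner ℂ (C f) g : ℂ) = (starRingEnd ℂ) (inner ℂ f (Cs g) : ℂ)

/-- `C` is an antilinear unitary: it is antilinear and its antilinear adjoint is its inverse. -/
def IsAntilinearUnitary (C : E → E) : Prop :=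
  IsAntilinearMap C ∧ ∃ Cs : E → E, IsAntilinearAdjointOf C Cs ∧
    Function.LeftInverse Cs C ∧ Function.RightInverse Cs C

/-- `T` is complex selfadjoint with respect to `C` (with inverse `Cinv`): `C T C⁻¹ = T*`. -/
def IsComplexSelfadjointWith [CompleteSpace E] (T : E →L[ℂ] E) (C Cinv : E → E) : Prop :=
  ∀ f : E, C (T (Cinv f)) = ContinuousLinearMap.adjoint T f

end Antilinear

section Aux

open scoped ComplexConjugate

lemma Linf.mul_coe (f g : Linf) : ⇑(f * g) =ᵐ[μH] fun x => f x * g x := by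
  have h : ⇑(f * g) =ᵐ[μH] ⇑f • ⇑g := MemLp.coeFn_toLp _
  filter_upwards [h] with x hx
  simpa [Pi.smul_apply', smul_eq_mul] using hx

lemma Linf.one_coe : ⇑(1 : Linf) =ᵐ[μH] fun _ => (1 : ℂ) := MemLp.coeFn_toLp _

lemma Linf.star_coe (f : Linf) : ⇑(star f) =ᵐ[μH] fun x => conj (f x) := MemLp.coeFn_toLp _

lemma mulCLM_coe (φ : Linf) (f : L2) : ⇑(mulCLM φ f) =ᵐ[μH] fun x => φ x * f x := by
  have h : ⇑(mulCLM φ f) =ᵐ[μH] ⇑φ • ⇑f := mulFun_coe φ f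
  filter_upwards [h] with x hx
  simpa [Pi.smul_apply', smul_eq_mul] using hx

lemma mulCLM_congr_ae {a b : Linf} (h : ⇑a =ᵐ[μH] ⇑b) (f : L2) : mulCLM a f = mulCLM b f := by
  apply Lp.ext
  filter_upwards [mulCLM_coe a f, mulCLM_coe b f, h] with x h1 h2 hx
  rw [h1, h2, hx]

lemma ab_one_ae {a b : Linf} (hab : a * b = 1) :
    (fun x => a x * b x) =ᵐ[μH] fun _ => (1 : ℂ) := by
  have h := (Linf.mul_coe a b).symm
  rw [hab] at h
  exact h.trans Linf.one_coe

lemma inner_mulCLM (φ : Linf) (f g : L2) :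
    (inner ℂ (mulCLM φ f) g : ℂ) = inner ℂ f (mulCLM (star φ) g) := by
  rw [MeasureTheory.L2.inner_def, MeasureTheory.L2.inner_def]
  apply integral_congr_ae
  filter_upwards [mulCLM_coe φ f, mulCLM_coe (star φ) g, Linf.star_coe φ] with x h1 h2 h3
  rw [RCLike.inner_apply, RCLike.inner_apply, h1, h2, h3, map_mul]
  ring

lemma inner_mulCLM_right (φ : Linf) (f g : L2) :
    (inner ℂ f (mulCLM φ g) : ℂ) = inner ℂ (mulCLM (star φ) f) g := by
  rw [MeasureTheory.L2.inner_def, MeasureTheory.L2.inner_def]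
  apply integral_congr_ae
  filter_upwards [mulCLM_coe φ g, mulCLM_coe (star φ) f, Linf.star_coe φ] with x h1 h2 h3
  rw [RCLike.inner_apply, RCLike.inner_apply, h1, h2, h3]
  simp only [map_mul, Complex.conj_conj]
  ring

end Aux
section Aux2

open scoped ComplexConjugate

lemma fourier_inner_mulCLM (h : Linf) (n k : ℤ) :
    (inner ℂ ((fourierBasis n : L2)) (mulCLM h (fourierBasis k)) : ℂ) =
      fourierCoeff (⇑h) (n - k) := by
  rw [MeasureTheory.L2.inner_def, fourierCoeff]
  apply integral_congr_ae
  have hb : ⇑(fourierBasis (T := 2 * Real.pi) n) =ᵐ[μH] fourier n := by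
    rw [coe_fourierBasis]; exact coeFn_fourierLp 2 n
  have hk : ⇑(fourierBasis (T := 2 * Real.pi) k) =ᵐ[μH] fourier k := by
    rw [coe_fourierBasis]; exact coeFn_fourierLp 2 k
  filter_upwards [hb, mulCLM_coe h (fourierBasis k), hk] with x h1 h2 h3
  rw [RCLike.inner_apply, h1, h2, h3, smul_eq_mul, ← fourier_neg]
  have he : -(n - k) = -n + k := by ring
  rw [he, fourier_add]
  ring

lemma hardy_mul {h : Linf} (hh : IsHardyInf h) {f : L2} (hf : f ∈ Hardy) :
    mulCLM h f ∈ Hardy := by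
  intro n hn
  rw [fourierBasis.repr_apply_apply]
  set T : L2 →L[ℂ] ℂ := (innerSL ℂ (fourierBasis n : L2)).comp (mulCLM h) with hT
  have hs : HasSum (fun k : ℤ => fourierBasis.repr f k • (fourierBasis k : L2)) f :=
    fourierBasis.hasSum_repr f
  have hs2 : HasSum (fun k : ℤ => T (fourierBasis.repr f k • (fourierBasis k : L2))) (T f) :=
    T.hasSum hs
  have hz : ∀ k : ℤ, T (fourierBasis.repr f k • (fourierBasis k : L2)) = 0 := by
    intro k
    rw [_root_.map_smul]
    rcases lt_or_ge k 0 with hk | hk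
    · rw [hf k hk]; simp
    · have : T (fourierBasis k : L2) = 0 := by
        rw [hT]
        simp only [ContinuousLinearMap.comp_apply, coe_innerSL_apply, innerSL_apply_apply]
        rw [fourier_inner_mulCLM]
        exact hh (n - k) (by omega)
      rw [this, smul_zero]
  have : T f = 0 := hs2.unique (by simp only [hz]; exact hasSum_zero)
  simpa [hT, innerSL_apply_apply] using this

end Aux2
section Aux3

open scoped ComplexConjugate

lemma coe_of_rel {θ' η' a b : Linf} (hrel : θ' = star b * η' * a) :
    ⇑θ' =ᵐ[μH] fun x => conj (b x) * η' x * a x := by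
  rw [hrel]
  filter_upwards [Linf.mul_coe (star b * η') a, Linf.mul_coe (star b) η',
    Linf.star_coe b] with x h1 h2 h3
  rw [h1, h2, h3]

lemma mapsTo_model {θ' η' a b : Linf} (hab : a * b = 1) (hb : IsHardyInf b)
    (hrel : θ' = star b * η' * a) {f : L2} (hf : f ∈ modelSpace θ') :
    mulCLM b f ∈ modelSpace η' := by
  obtain ⟨hf1, hf2⟩ := Submodule.mem_inf.mp hf
  refine Submodule.mem_inf.mpr ⟨hardy_mul hb hf1, ?_⟩
  rw [Submodule.mem_orthogonal]
  rintro v hv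
  obtain ⟨w, hw, rfl⟩ := hv
  have key : mulCLM (star b) (mulCLM η' w) = mulCLM θ' (mulCLM b w) := by
    apply Lp.ext
    filter_upwards [mulCLM_coe (star b) (mulCLM η' w), mulCLM_coe η' w,
      mulCLM_coe θ' (mulCLM b w), mulCLM_coe b w, Linf.star_coe b,
      coe_of_rel hrel, ab_one_ae hab] with x h1 h2 h3 h4 h5 h6 h7
    rw [h1, h5, h2, h3, h6, h4]
    calc conj (b x) * (η' x * w x)
        = conj (b x) * η' x * (a x * b x) * w x := by rw [h7]; ring
      _ = conj (b x) * η' x * a x * (b x * w x) := by ring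
  have h8 : (inner ℂ ((mulCLM η' : L2 →ₗ[ℂ] L2) w) (mulCLM b f) : ℂ)
      = inner ℂ (mulCLM θ' (mulCLM b w)) f := by
    rw [ContinuousLinearMap.coe_coe, inner_mulCLM_right b (mulCLM η' w) f, key]
  rw [h8]
  exact (Submodule.mem_orthogonal _ _).mp hf2 _ ⟨mulCLM b w, hardy_mul hb hw, rfl⟩

lemma mapsTo_model' {θ' η' a b : Linf} (hab : a * b = 1) (ha : IsHardyInf a)
    (hrel : θ' = star b * η' * a) {g : L2} (hg : g ∈ modelSpace η') :
    mulCLM a g ∈ modelSpace θ' := by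
  obtain ⟨hg1, hg2⟩ := Submodule.mem_inf.mp hg
  refine Submodule.mem_inf.mpr ⟨hardy_mul ha hg1, ?_⟩
  rw [Submodule.mem_orthogonal]
  rintro v hv
  obtain ⟨w, hw, rfl⟩ := hv
  have key : mulCLM (star a) (mulCLM θ' w) = mulCLM η' (mulCLM a w) := by
    apply Lp.ext
    filter_upwards [mulCLM_coe (star a) (mulCLM θ' w), mulCLM_coe θ' w,
      mulCLM_coe η' (mulCLM a w), mulCLM_coe a w, Linf.star_coe a,
      coe_of_rel hrel, ab_one_ae hab] with x h1 h2 h3 h4 h5 h6 h7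
    rw [h1, h5, h2, h3, h6, h4]
    have hone : conj (a x) * conj (b x) = 1 := by rw [← map_mul, h7, map_one]
    calc conj (a x) * (conj (b x) * η' x * a x * w x)
        = (conj (a x) * conj (b x)) * (η' x * (a x * w x)) := by ring
      _ = η' x * (a x * w x) := by rw [hone, one_mul]
  have h8 : (inner ℂ ((mulCLM θ' : L2 →ₗ[ℂ] L2) w) (mulCLM a g) : ℂ)
      = inner ℂ (mulCLM η' (mulCLM a w)) g := by
    rw [ContinuousLinearMap.coe_coe, inner_mulCLM_right a (mulCLM θ' w) g, key]
  rw [h8]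
  exact (Submodule.mem_orthogonal _ _).mp hg2 _ ⟨mulCLM a w, hardy_mul ha hw, rfl⟩

lemma genToeplitz_coe {φ : Linf} {K₁ K₂ : Submodule ℂ L2} [CompleteSpace K₂] (f : K₁)
    (h : mulCLM φ (f : L2) ∈ K₂) :
    ((genToeplitz φ K₁ K₂ f : K₂) : L2) = mulCLM φ (f : L2) := by
  show ((Submodule.orthogonalProjectionOnto K₂ (mulCLM φ (f : L2)) : K₂) : L2) = _
  rw [show (mulCLM φ (f : L2)) = ((⟨_, h⟩ : K₂) : L2) from rfl,
    Submodule.orthogonalProjectionOnto_mem_subspace_eq_self]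

end Aux3
section Aux4

open scoped ComplexConjugate

lemma mulCLM_cancel {a b : Linf} (hab : a * b = 1) (f : L2) :
    mulCLM a (mulCLM b f) = f := by
  apply Lp.ext
  filter_upwards [mulCLM_coe a (mulCLM b f), mulCLM_coe b f, ab_one_ae hab] with x h1 h2 h3

  rw [h1, h2, ← mul_assoc, h3, one_mul]

lemma mulCLM_cancel' {a b : Linf} (hab : a * b = 1) (f : L2) :
    mulCLM b (mulCLM a f) = f := by
  apply Lp.ext
  filter_upwards [mulCLM_coe b (mulCLM a f), mulCLM_coe a f, ab_one_ae hab] with x h1 h2 h3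

  rw [h1, h2, ← mul_assoc, mul_comm (b x) (a x), h3, one_mul]

lemma star_star_ae (b : Linf) : ⇑(star (star b)) =ᵐ[μH] ⇑b := by
  filter_upwards [Linf.star_coe (star b), Linf.star_coe b] with x h1 h2
  rw [h1, h2, Complex.conj_conj]

lemma proj_coe_of_mem {K : Submodule ℂ L2} [CompleteSpace K] {u : L2} (h : u ∈ K) :
    ((Submodule.orthogonalProjectionOnto K u : K) : L2) = u := by
  rw [show u = ((⟨u, h⟩ : K) : L2) from rfl, Submodule.orthogonalProjectionOnto_mem_subspace_eq_self]

end Aux4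

section Aux5
open scoped ComplexConjugate

lemma mulCLM_mid_cancel (c φa a b : Linf) (hab : a * b = 1) (F : L2) :
    mulCLM (c * φa * a) (mulCLM b F) = mulCLM (c * φa) F := by
  apply Lp.ext
  filter_upwards [mulCLM_coe (c * φa * a) (mulCLM b F), mulCLM_coe b F,
    mulCLM_coe (c * φa) F, Linf.mul_coe (c * φa) a, ab_one_ae hab] with x h1 h2 h3 h4 h5
  rw [h1, h4, h2, h3, mul_assoc, ← mul_assoc (a x), h5, one_mul]

lemma mulCLM_star_cancel (a b φa : Linf) (hab : a * b = 1) (F : L2) :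
    mulCLM (star b) (mulCLM (star a * φa) F) = mulCLM φa F := by
  apply Lp.ext
  filter_upwards [mulCLM_coe (star b) (mulCLM (star a * φa) F),
    mulCLM_coe (star a * φa) F, mulCLM_coe φa F, Linf.mul_coe (star a) φa,
    Linf.star_coe a, Linf.star_coe b, ab_one_ae hab] with x h1 h2 h3 h4 h5 h6 h7
  rw [h1, h6, h2, h4, h5, h3]
  have hone : conj (a x) * conj (b x) = 1 := by rw [← map_mul, h7, map_one]
  calc conj (b x) * (conj (a x) * φa x * F x)
      = (conj (a x) * conj (b x)) * (φa x * F x) := by ring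
    _ = φa x * F x := by rw [hone, one_mul]

end Aux5
/-- Theorem 6.1: if `θ = ā₁⁻¹ η a₁` and `α = ā₂⁻¹ γ a₂` with
`a₁, a₂ ∈ 𝒢H∞` (inverses `b₁, b₂`), then for any `φ ∈ L∞`, with `φ̃ = ā₂ φ a₁`,
`A_φ^{θ,α} = A_{ā₂⁻¹}^{γ,α} A_{φ̃}^{η,γ} A_{a₁⁻¹}^{θ,η}` where
`A_{a₁⁻¹}^{θ,η} = M_{a₁⁻¹}|_{K_θ}`; in particular `A_φ^{θ,α}` is equivalent to
`A_{φ̃}^{η,γ}`. -/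
theorem statement18 (θ α η γ : Linf)
    (hθ : IsInner θ) (hα : IsInner α) (hη : IsInner η) (hγ : IsInner γ)
    (a₁ b₁ a₂ b₂ : Linf) (h₁ : GHinfPair a₁ b₁) (h₂ : GHinfPair a₂ b₂)
    (hθη : θ = star b₁ * η * a₁) (hαγ : α = star b₂ * γ * a₂) (φ : Linf) :
    genToeplitz φ (modelSpace θ) (modelSpace α) =
      (genToeplitz (star b₂) (modelSpace γ) (modelSpace α)).comp
        ((genToeplitz (star a₂ * φ * a₁) (modelSpace η) (modelSpace γ)).comp
          (genToeplitz b₁ (modelSpace θ) (modelSpace η))) ∧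
    (∀ f : modelSpace θ,
      (genToeplitz b₁ (modelSpace θ) (modelSpace η) f : L2) = mulCLM b₁ (f : L2)) ∧
    (∃ E' : modelSpace α →L[ℂ] modelSpace γ,
      (genToeplitz (star b₂) (modelSpace γ) (modelSpace α)).comp E' =
        ContinuousLinearMap.id ℂ (modelSpace α) ∧
      E'.comp (genToeplitz (star b₂) (modelSpace γ) (modelSpace α)) =
        ContinuousLinearMap.id ℂ (modelSpace γ)) ∧
    (∃ F' : modelSpace η →L[ℂ] modelSpace θ,
      (genToeplitz b₁ (modelSpace θ) (modelSpace η)).comp F' =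
        ContinuousLinearMap.id ℂ (modelSpace η) ∧
      F'.comp (genToeplitz b₁ (modelSpace θ) (modelSpace η)) =
        ContinuousLinearMap.id ℂ (modelSpace θ)) := by
  obtain ⟨ha₁, hb₁, hab₁⟩ := h₁
  obtain ⟨ha₂, hb₂, hab₂⟩ := h₂
  have hmapθη : ∀ f : modelSpace θ, mulCLM b₁ (f : L2) ∈ modelSpace η :=
    fun f => mapsTo_model hab₁ hb₁ hθη f.2
  have hmapηθ : ∀ g : modelSpace η, mulCLM a₁ (g : L2) ∈ modelSpace θ :=
    fun g => mapsTo_model' hab₁ ha₁ hθη g.2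
  have hmapαγ : ∀ k : modelSpace α, mulCLM b₂ (k : L2) ∈ modelSpace γ :=
    fun k => mapsTo_model hab₂ hb₂ hαγ k.2
  have hmapγα : ∀ g : modelSpace γ, mulCLM a₂ (g : L2) ∈ modelSpace α :=
    fun g => mapsTo_model' hab₂ ha₂ hαγ g.2
  refine ⟨?_, fun f => genToeplitz_coe f (hmapθη f), ?_, ?_⟩
  · -- factorization
    refine ContinuousLinearMap.ext fun f => Subtype.ext ?_
    simp only [genToeplitz, ContinuousLinearMap.comp_apply, Submodule.subtypeL_apply]
    rw [proj_coe_of_mem (hmapθη f)]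
    set v : L2 := mulCLM (star a₂ * φ) (f : L2) with hv
    have stepA : mulCLM (star a₂ * φ * a₁) (mulCLM b₁ (f : L2)) = v :=
      mulCLM_mid_cancel (star a₂) φ a₁ b₁ hab₁ (f : L2)
    rw [stepA]
    have hdiff : ((Submodule.orthogonalProjectionOnto (modelSpace γ) v : modelSpace γ) : L2) - v
        ∈ (modelSpace γ)ᗮ := by
      have h0 := Submodule.sub_starProjection_mem_orthogonal (K := modelSpace γ) v
      rw [← neg_sub]
      exact neg_mem h0
    have horth : mulCLM (star b₂)
        (((Submodule.orthogonalProjectionOnto (modelSpace γ) v : modelSpace γ) : L2) - v)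
        ∈ (modelSpace α)ᗮ := by
      rw [Submodule.mem_orthogonal]
      intro k hk
      rw [inner_mulCLM_right (star b₂) k _, mulCLM_congr_ae (star_star_ae b₂) k]
      exact (Submodule.mem_orthogonal _ _).mp hdiff _ (hmapαγ ⟨k, hk⟩)
    have stepB : Submodule.orthogonalProjectionOnto (modelSpace α)
          (mulCLM (star b₂) ((Submodule.orthogonalProjectionOnto (modelSpace γ) v : modelSpace γ) : L2))
        = Submodule.orthogonalProjectionOnto (modelSpace α) (mulCLM (star b₂) v) := by
      have h0 : Submodule.orthogonalProjectionOnto (modelSpace α)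
          (mulCLM (star b₂) (((Submodule.orthogonalProjectionOnto (modelSpace γ) v : modelSpace γ) : L2) - v))
          = 0 := Submodule.orthogonalProjectionOnto_apply_of_mem_orthogonal horth
      rw [map_sub, map_sub, sub_eq_zero] at h0
      exact h0
    have stepC : mulCLM (star b₂) v = mulCLM φ (f : L2) :=
      mulCLM_star_cancel a₂ b₂ φ hab₂ (f : L2)
    rw [stepB, stepC]
  · -- invertibility of A_{star b₂}
    have hTba : (genToeplitz a₂ (modelSpace γ) (modelSpace α)).comp
        (genToeplitz b₂ (modelSpace α) (modelSpace γ)) = ContinuousLinearMap.id ℂ _ := by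
      refine ContinuousLinearMap.ext fun k => Subtype.ext ?_
      have e1 : genToeplitz b₂ (modelSpace α) (modelSpace γ) k
          = ⟨mulCLM b₂ (k : L2), hmapαγ k⟩ := Subtype.ext (genToeplitz_coe k (hmapαγ k))
      rw [ContinuousLinearMap.comp_apply, e1, genToeplitz_coe _ (hmapγα ⟨_, hmapαγ k⟩)]
      exact mulCLM_cancel hab₂ (k : L2)
    have hTab : (genToeplitz b₂ (modelSpace α) (modelSpace γ)).comp
        (genToeplitz a₂ (modelSpace γ) (modelSpace α)) = ContinuousLinearMap.id ℂ _ := by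
      refine ContinuousLinearMap.ext fun g => Subtype.ext ?_
      have e1 : genToeplitz a₂ (modelSpace γ) (modelSpace α) g
          = ⟨mulCLM a₂ (g : L2), hmapγα g⟩ := Subtype.ext (genToeplitz_coe g (hmapγα g))
      rw [ContinuousLinearMap.comp_apply, e1, genToeplitz_coe _ (hmapαγ ⟨_, hmapγα g⟩)]
      exact mulCLM_cancel' hab₂ (g : L2)
    have hadj : genToeplitz (star b₂) (modelSpace γ) (modelSpace α)
        = ContinuousLinearMap.adjoint (genToeplitz b₂ (modelSpace α) (modelSpace γ)) := by
      rw [ContinuousLinearMap.eq_adjoint_iff]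
      intro g k
      rw [Submodule.coe_inner, Submodule.coe_inner]
      have h1 : ((genToeplitz (star b₂) (modelSpace γ) (modelSpace α) g : modelSpace α) : L2)
          = (Submodule.orthogonalProjectionOnto (modelSpace α) (mulCLM (star b₂) (g : L2)) : modelSpace α) :=
        rfl
      rw [h1, ← Submodule.starProjection_apply, Submodule.inner_starProjection_left_eq_right,
        Submodule.starProjection_apply, proj_coe_of_mem k.2,
        inner_mulCLM (star b₂) (g : L2) (k : L2),
        mulCLM_congr_ae (star_star_ae b₂) (k : L2), ← genToeplitz_coe k (hmapαγ k)]
    refine ⟨ContinuousLinearMap.adjoint (genToeplitz a₂ (modelSpace γ) (modelSpace α)), ?_, ?_⟩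
    · rw [hadj, ← ContinuousLinearMap.adjoint_comp, hTba, ContinuousLinearMap.adjoint_id]
    · rw [hadj, ← ContinuousLinearMap.adjoint_comp, hTab, ContinuousLinearMap.adjoint_id]
  · -- invertibility of A_{b₁}
    refine ⟨genToeplitz a₁ (modelSpace η) (modelSpace θ), ?_, ?_⟩
    · refine ContinuousLinearMap.ext fun g => Subtype.ext ?_
      have e1 : genToeplitz a₁ (modelSpace η) (modelSpace θ) g
          = ⟨mulCLM a₁ (g : L2), hmapηθ g⟩ := Subtype.ext (genToeplitz_coe g (hmapηθ g))
      rw [ContinuousLinearMap.comp_apply, e1, genToeplitz_coe _ (hmapθη ⟨_, hmapηθ g⟩)]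
      exact mulCLM_cancel' hab₁ (g : L2)
    · refine ContinuousLinearMap.ext fun f => Subtype.ext ?_
      have e1 : genToeplitz b₁ (modelSpace θ) (modelSpace η) f
          = ⟨mulCLM b₁ (f : L2), hmapθη f⟩ := Subtype.ext (genToeplitz_coe f (hmapθη f))
      rw [ContinuousLinearMap.comp_apply, e1, genToeplitz_coe _ (hmapηθ ⟨_, hmapθη f⟩)]
      exact mulCLM_cancel hab₁ (f : L2)
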